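/- With Q = (1/m) Σ_{k=1}^{m-1} k R^k, one has −Q(Id − R) = P_{Δ^⊥}, the orthogonal projection onto the orthogonal complement of the diagonal. -/

import Mathlib

open scoped RealInnerProductSpace
open Fin.NatCast

lemma tele_aux {E : Type*} [AddCommGroup E] [Module ℝ E] (a : ℕ → E) (n : ℕ) :
    ∑ k ∈ Finset.Icc 1 n, (k : ℝ) • (a k - a (k + 1)) =
      (∑ k ∈ Finset.Icc 1 n, a k) - (n : ℝ) • a (n + 1) := by
  induction n with
  | zero => simp
  | succ n ih =>
      rw [Finset.sum_Icc_succ_top (by omega), Finset.sum_Icc_succ_top (by omega), ih]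
      push_cast
      rw [smul_sub, add_smul, one_smul]
      abel

theorem stmt6 {X : Type*} [NormedAddCommGroup X] [InnerProductSpace ℝ X] [CompleteSpace X]
    (m : ℕ) [NeZero m] (hm : 2 ≤ m)
    (R : PiLp 2 (fun _ : Fin m => X) →L[ℝ] PiLp 2 (fun _ : Fin m => X))
    (hR : ∀ (x : PiLp 2 (fun _ : Fin m => X)) (i : Fin m), R x i = x (i - 1))
    (Δ : Submodule ℝ (PiLp 2 (fun _ : Fin m => X)))
    (hΔ : ∀ x, x ∈ Δ ↔ ∃ c : X, ∀ i, x i = c)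
    (P : PiLp 2 (fun _ : Fin m => X) →L[ℝ] PiLp 2 (fun _ : Fin m => X))
    (hP : ∀ x, P x ∈ Δ ∧ x - P x ∈ Δᗮ)
    (Q : PiLp 2 (fun _ : Fin m => X) →L[ℝ] PiLp 2 (fun _ : Fin m => X))
    (hQ : Q = (m : ℝ)⁻¹ • ∑ k ∈ Finset.Icc 1 (m - 1), (k : ℝ) • R ^ k) :
    -(Q.comp (1 - R)) = 1 - P := by
  have hm0 : (m : ℝ) ≠ 0 := Nat.cast_ne_zero.mpr (NeZero.ne m)
  have hRpow : ∀ (k : ℕ) (x : PiLp 2 (fun _ : Fin m => X)) (i : Fin m),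
      (R ^ k) x i = x (i - (k : Fin m)) := by
    intro k
    induction k with
    | zero => intro x i; rw [pow_zero]; rw [Nat.cast_zero, sub_zero]; rfl
    | succ k ih =>
        intro x i
        rw [pow_succ', ContinuousLinearMap.mul_apply, hR, ih]
        refine congrArg x.ofLp ?_
        push_cast
        abel
  ext x i
  set S : X := ∑ j : Fin m, x j with hS
  set c : X := (m : ℝ)⁻¹ • S with hc
  set d : PiLp 2 (fun _ : Fin m => X) := WithLp.toLp 2 (fun _ => c) with hd
  have hdΔ : d ∈ Δ := (hΔ d).mpr ⟨c, fun _ => rfl⟩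
  have hxd : x - d ∈ Δᗮ := by
    rw [Submodule.mem_orthogonal]
    intro u hu
    obtain ⟨e, he⟩ := (hΔ u).mp hu
    rw [PiLp.inner_apply]
    have h1 : ∀ i : Fin m, ⟪u i, (x - d) i⟫ = ⟪e, x i - c⟫ := by
      intro i; rw [he i]; rfl
    rw [Finset.sum_congr rfl fun i _ => h1 i, ← inner_sum]
    have hsum : ∑ i : Fin m, (x i - c) = 0 := by
      rw [Finset.sum_sub_distrib, Finset.sum_const, Finset.card_univ, Fintype.card_fin,
        hc, ← Nat.cast_smul_eq_nsmul ℝ, smul_smul, mul_inv_cancel₀ hm0, one_smul, ← hS,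
        sub_self]
    rw [hsum, inner_zero_right]
  have hPx : P x = d := by
    have h1 := (hP x).1
    have h2 := (hP x).2
    have hmem : P x - d ∈ Δ := Δ.sub_mem h1 hdΔ
    have hmem' : P x - d ∈ Δᗮ := by
      have h3 : P x - d = (x - d) - (x - P x) := by abel
      rw [h3]; exact Δᗮ.sub_mem hxd h2
    have h4 := Submodule.inner_left_of_mem_orthogonal hmem hmem'
    rw [inner_self_eq_zero, sub_eq_zero] at h4
    exact h4
  conv_rhs => rw [ContinuousLinearMap.sub_apply, ContinuousLinearMap.one_apply, hPx]
  rw [ContinuousLinearMap.neg_apply, ContinuousLinearMap.comp_apply, hQ,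
    ContinuousLinearMap.smul_apply, ContinuousLinearMap.sum_apply]
  -- LHS
  set a : ℕ → X := fun k => x (i - (k : Fin m)) with ha
  have ha0 : a 0 = x i := by
    show x (i - ((0 : ℕ) : Fin m)) = x i
    rw [Nat.cast_zero, sub_zero]
  have ham : a m = x i := by
    show x (i - ((m : ℕ) : Fin m)) = x i
    rw [Fin.natCast_self, sub_zero]
  have key : ∀ k : ℕ, ((R ^ k) ((1 - R) x)) i = a k - a (k + 1) := by
    intro k
    rw [hRpow]
    have h5 : ((1 - R) x) = x - R x := rfl
    rw [h5]
    show x (i - (k : Fin m)) - R x (i - (k : Fin m)) = a k - a (k + 1)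
    rw [hR]
    congr 1
    show x (i - (k : Fin m) - 1) = x (i - ((k + 1 : ℕ) : Fin m))
    refine congrArg x.ofLp ?_
    push_cast
    abel
  have happ : ∀ (s : Finset ℕ) (f : ℕ → PiLp 2 (fun _ : Fin m => X)),
      (∑ k ∈ s, f k) i = ∑ k ∈ s, f k i := by
    intro s f
    classical
    induction s using Finset.induction_on with
    | empty => rfl
    | insert _ _ h ih => rw [Finset.sum_insert h, Finset.sum_insert h, PiLp.add_apply, ih]
  have hterm : ∑ k ∈ Finset.Icc 1 (m - 1), ((k : ℝ) • R ^ k) ((1 - R) x) i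
      = ∑ k ∈ Finset.Icc 1 (m - 1), (k : ℝ) • (a k - a (k + 1)) :=
    Finset.sum_congr rfl fun k _ => by
      rw [ContinuousLinearMap.smul_apply, PiLp.smul_apply, key k]
  rw [PiLp.neg_apply, PiLp.smul_apply, happ, hterm, tele_aux, PiLp.sub_apply]
  have hm1 : m - 1 + 1 = m := by omega
  rw [hm1, ham]
  have hrange : Finset.range m = insert 0 (Finset.Icc 1 (m - 1)) := by
    ext k; simp only [Finset.mem_range, Finset.mem_insert, Finset.mem_Icc]; omega
  have hsumS : ∑ k ∈ Finset.range m, a k = S := by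
    rw [hS]
    rw [Finset.sum_range fun k => a k]
    rw [show (∑ k : Fin m, a k) = ∑ k : Fin m, x (i - k) from
      Finset.sum_congr rfl fun k _ => by
        show x (i - ((k.val : ℕ) : Fin m)) = x (i - k)
        rw [Fin.cast_val_eq_self]]
    exact Fintype.sum_equiv (Equiv.subLeft i) _ _ fun j => rfl
  have hsumIcc : ∑ k ∈ Finset.Icc 1 (m - 1), a k = S - x i := by
    have h6 := hsumS
    rw [hrange, Finset.sum_insert (by simp), ha0] at h6
    exact eq_sub_of_add_eq' h6
  rw [hsumIcc]
  have hcast : ((m - 1 : ℕ) : ℝ) = (m : ℝ) - 1 := by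
    rw [Nat.cast_sub (by omega)]; norm_num
  rw [hcast]
  have h7 : S - x i - ((m : ℝ) - 1) • x i = S - (m : ℝ) • x i := by module
  rw [h7]
  show -((m : ℝ)⁻¹ • (S - (m : ℝ) • x i)) = x i - c
  rw [hc, smul_sub, neg_sub, smul_smul, inv_mul_cancel₀ hm0, one_smul]
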